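/- One-step error recursion for the averaged KWSA gradient surrogate (Lemma 1, part 3): let x_prev, x ∈ C with ‖x − x_prev‖ ≤ γR for some γ ≥ 0, let d_prev ∈ ℝ^d, ρ ∈ (0, 1], c > 0, and let d(y) = (1 − ρ)·d_prev + ρ·Σ_{i=1}^d ((F(x + c·e_i, y) − F(x, y))/c)·e_i, where e_1, …, e_d is the standard orthonormal basis of ℝ^d. Then ∫ ‖∇f(x) − d(y)‖² dP(y) ≤ 2ρ²σ² + 2ρc²dL² + 2L²R²γ²/ρ + (1 − ρ/2)·‖∇f(x_prev) − d_prev‖². -/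

import Mathlib

open MeasureTheory
open scoped RealInnerProductSpace BigOperators

lemma descent_aux {n : ℕ} (φ : EuclideanSpace ℝ (Fin n) → ℝ)
    (hφ : Differentiable ℝ φ) (L : ℝ) (hL : 0 ≤ L)
    (hLip : ∀ u w, ‖gradient φ u - gradient φ w‖ ≤ L * ‖u - w‖)
    (x h : EuclideanSpace ℝ (Fin n)) :
    |φ (x + h) - φ x - ⟪gradient φ x, h⟫| ≤ L / 2 * ‖h‖ ^ 2 := by
  have hgc : Continuous (fun z => gradient φ z) := by
    have hlw : LipschitzWith (Real.toNNReal L) (fun z => gradient φ z) := by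
      apply LipschitzWith.of_dist_le_mul
      intro u w
      simpa [dist_eq_norm, Real.coe_toNNReal L hL] using hLip u w
    exact hlw.continuous
  have hderiv : ∀ t : ℝ, HasDerivAt (fun s : ℝ => φ (x + s • h))
      ⟪gradient φ (x + t • h), h⟫ t := by
    intro t
    have h1 : HasFDerivAt φ ((InnerProductSpace.toDual ℝ _) (gradient φ (x + t • h)))
        (x + t • h) := (hφ _).hasGradientAt.hasFDerivAt
    have h2 : HasDerivAt (fun s : ℝ => x + s • h) h t := by
      simpa using ((hasDerivAt_id t).smul_const h).const_add x
    have := h1.comp_hasDerivAt t h2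
    simpa [Function.comp_def] using this
  have hcont : Continuous fun t : ℝ => ⟪gradient φ (x + t • h), h⟫ := by
    exact (hgc.comp (by continuity)).inner continuous_const
  have hii : IntervalIntegrable (fun t => ⟪gradient φ (x + t • h), h⟫) volume 0 1 :=
    hcont.intervalIntegrable 0 1
  have key : φ (x + h) - φ x = ∫ t in (0:ℝ)..1, ⟪gradient φ (x + t • h), h⟫ := by
    have := intervalIntegral.integral_eq_sub_of_hasDerivAt (fun t _ => hderiv t) hii
    simp only [one_smul, zero_smul, add_zero] at this
    exact this.symm
  have key2 : φ (x + h) - φ x - ⟪gradient φ x, h⟫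
      = ∫ t in (0:ℝ)..1, (⟪gradient φ (x + t • h), h⟫ - ⟪gradient φ x, h⟫) := by
    rw [intervalIntegral.integral_sub hii (intervalIntegrable_const), ← key]
    simp
  rw [key2, ← Real.norm_eq_abs]
  have hb : ∀ᵐ t ∂(volume.restrict (Set.uIoc (0:ℝ) 1)),
      ‖⟪gradient φ (x + t • h), h⟫ - ⟪gradient φ x, h⟫‖ ≤ L * ‖h‖ ^ 2 * t := by
    rw [ae_restrict_iff' measurableSet_uIoc]
    filter_upwards with t ht
    rw [Set.uIoc_of_le (by norm_num : (0:ℝ) ≤ 1)] at ht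
    have h1 : ⟪gradient φ (x + t • h), h⟫ - ⟪gradient φ x, h⟫
        = ⟪gradient φ (x + t • h) - gradient φ x, h⟫ := by
      rw [inner_sub_left]
    rw [h1, Real.norm_eq_abs]
    calc |⟪gradient φ (x + t • h) - gradient φ x, h⟫|
        ≤ ‖gradient φ (x + t • h) - gradient φ x‖ * ‖h‖ := abs_real_inner_le_norm _ _
      _ ≤ (L * ‖t • h‖) * ‖h‖ := by
          apply mul_le_mul_of_nonneg_right _ (norm_nonneg h)
          simpa using hLip (x + t • h) x
      _ = L * ‖h‖ ^ 2 * t := by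
          rw [norm_smul, Real.norm_eq_abs, abs_of_pos ht.1]; ring
  have := intervalIntegral.norm_integral_le_abs_of_norm_le hb
    (by apply Continuous.intervalIntegrable; continuity)
  refine this.trans ?_
  have : (∫ t in (0:ℝ)..1, L * ‖h‖ ^ 2 * t) = L * ‖h‖ ^ 2 * (1/2) := by
    rw [intervalIntegral.integral_const_mul, integral_id]
    norm_num
  rw [this, abs_of_nonneg (by positivity)]
  ring_nf
  exact le_refl _

lemma coord_bias {n : ℕ} (φ : EuclideanSpace ℝ (Fin n) → ℝ)
    (hφ : Differentiable ℝ φ) (L c : ℝ) (hL : 0 ≤ L) (hc : 0 < c)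
    (hLip : ∀ u w, ‖gradient φ u - gradient φ w‖ ≤ L * ‖u - w‖)
    (x : EuclideanSpace ℝ (Fin n)) (i : Fin n) :
    |(φ (x + c • EuclideanSpace.single i (1:ℝ)) - φ x) / c - gradient φ x i| ≤ L * c / 2 := by
  have h1 := descent_aux φ hφ L hL hLip x (c • EuclideanSpace.single i (1:ℝ))
  have h2 : ⟪gradient φ x, c • EuclideanSpace.single i (1:ℝ)⟫ = c * gradient φ x i := by
    rw [inner_smul_right]
    rw [EuclideanSpace.inner_single_right]; simp
  have h3 : ‖c • EuclideanSpace.single i (1:ℝ)‖ = c := by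
    rw [norm_smul, EuclideanSpace.norm_single]
    simp [abs_of_pos hc]
  rw [h2, h3] at h1
  have h4 : (φ (x + c • EuclideanSpace.single i (1:ℝ)) - φ x) / c - gradient φ x i
      = (φ (x + c • EuclideanSpace.single i (1:ℝ)) - φ x - c * gradient φ x i) / c := by
    field_simp
  rw [h4, abs_div, abs_of_pos hc, div_le_iff₀ hc]
  calc |φ (x + c • EuclideanSpace.single i (1:ℝ)) - φ x - c * gradient φ x i|
      ≤ L / 2 * c ^ 2 := h1
    _ = L * c / 2 * c := by ring

lemma normsq_coords {n : ℕ} (w : EuclideanSpace ℝ (Fin n)) : ‖w‖^2 = ∑ i, (w i)^2 := by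
  rw [EuclideanSpace.norm_eq, Real.sq_sqrt (by positivity)]
  simp [sq_abs]

lemma sum_single_apply {n : ℕ} (q : Fin n → ℝ) (j : Fin n) :
    (∑ i, q i • EuclideanSpace.single i (1:ℝ)) j = q j := by
  have : (∑ i, q i • EuclideanSpace.single i (1:ℝ)) j
      = ∑ i, (q i • EuclideanSpace.single i (1:ℝ)) j :=
    by rw [WithLp.ofLp_sum]; exact Finset.sum_apply j Finset.univ _
  rw [this]
  simp [EuclideanSpace.single_apply]

lemma sum_single_eq {n : ℕ} (w : EuclideanSpace ℝ (Fin n)) :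
    ∑ i, w i • EuclideanSpace.single i (1:ℝ) = w := by
  ext j
  exact sum_single_apply (fun i => w i) j


set_option maxHeartbeats 4000000 in
theorem kwsa_surrogate_one_step_error_recursion
    (d : ℕ) (hd : 1 ≤ d)
    (C : Set (EuclideanSpace ℝ (Fin d)))
    (hCne : C.Nonempty) (hCcomp : IsCompact C) (hCconv : Convex ℝ C)
    (R : ℝ) (hR : 0 < R) (hdiam : ∀ u ∈ C, ∀ w ∈ C, ‖u - w‖ ≤ R)
    (Y : Type*) [MeasurableSpace Y] (P : Measure Y) [IsProbabilityMeasure P]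
    (F : EuclideanSpace ℝ (Fin d) → Y → ℝ)
    (hFmeas : Measurable (Function.uncurry F))
    (L : ℝ) (hL : 0 < L)
    (hFdiff : ∀ᵐ y ∂P, Differentiable ℝ (fun x' => F x' y))
    (hFlip : ∀ᵐ y ∂P, ∀ u w : EuclideanSpace ℝ (Fin d),
      ‖gradient (fun x' => F x' y) u - gradient (fun x' => F x' y) w‖ ≤ L * ‖u - w‖)
    (f : EuclideanSpace ℝ (Fin d) → ℝ)
    (hf : ∀ x', f x' = ∫ y, F x' y ∂P)
    (hgradf : ∀ x' : EuclideanSpace ℝ (Fin d),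
      gradient f x' = ∫ y, gradient (fun x'' => F x'' y) x' ∂P)
    (L₁ : ℝ) (hL₁ : ∀ x' ∈ C, (∫ y, ‖gradient (fun x'' => F x'' y) x'‖ ^ 2 ∂P) ≤ L₁ ^ 2)
    (σ : ℝ) (hσ : ∀ x' ∈ C,
      (∫ y, ‖gradient (fun x'' => F x'' y) x' - gradient f x'‖ ^ 2 ∂P) ≤ σ ^ 2)
    (hflip : ∀ u w, ‖gradient f u - gradient f w‖ ≤ L * ‖u - w‖)
    (xprev x : EuclideanSpace ℝ (Fin d)) (hxprev : xprev ∈ C) (hx : x ∈ C)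
    (γ : ℝ) (hγ : 0 ≤ γ) (hstep : ‖x - xprev‖ ≤ γ * R)
    (dprev : EuclideanSpace ℝ (Fin d))
    (ρ : ℝ) (hρ0 : 0 < ρ) (hρ1 : ρ ≤ 1)
    (c : ℝ) (hc : 0 < c) :
    (∫ y,
        ‖gradient f x -
          ((1 - ρ) • dprev +
            ρ • ∑ i : Fin d, ((F (x + c • EuclideanSpace.single i (1 : ℝ)) y - F x y) / c) •
              EuclideanSpace.single i (1 : ℝ))‖ ^ 2 ∂P) ≤
      2 * ρ ^ 2 * σ ^ 2 + 2 * ρ * c ^ 2 * d * L ^ 2 +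
        2 * L ^ 2 * R ^ 2 * γ ^ 2 / ρ +
        (1 - ρ / 2) * ‖gradient f xprev - dprev‖ ^ 2 := by
  classical
  set v : EuclideanSpace ℝ (Fin d) := gradient f xprev - dprev with hv
  set δ : EuclideanSpace ℝ (Fin d) := gradient f x - gradient f xprev with hδdef
  set u : EuclideanSpace ℝ (Fin d) := (1 - ρ) • v + (1 - ρ) • δ with hu
  set g : Y → EuclideanSpace ℝ (Fin d) := fun y =>
    ∑ i : Fin d, ((F (x + c • EuclideanSpace.single i (1 : ℝ)) y - F x y) / c) •
      EuclideanSpace.single i (1 : ℝ) with hgdef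
  set G : Y → EuclideanSpace ℝ (Fin d) := fun y => gradient (fun x'' => F x'' y) x with hGdef
  set b : Y → EuclideanSpace ℝ (Fin d) := fun y => gradient f x - g y with hbdef
  have ha_eq : ∀ y : Y,
      gradient f x - ((1 - ρ) • dprev +
        ρ • ∑ i : Fin d, ((F (x + c • EuclideanSpace.single i (1 : ℝ)) y - F x y) / c) •
          EuclideanSpace.single i (1 : ℝ)) = u + ρ • b y := by
    intro y
    show gradient f x - ((1 - ρ) • dprev + ρ • g y)
      = ((1 - ρ) • (gradient f xprev - dprev) + (1 - ρ) • (gradient f x - gradient f xprev))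
        + ρ • (gradient f x - g y)
    module
  simp only [ha_eq]
  have hrhs1 : (0:ℝ) ≤ 2 * ρ ^ 2 * σ ^ 2 := by positivity
  have hrhs2 : (0:ℝ) ≤ 2 * ρ * c ^ 2 * d * L ^ 2 := by positivity
  have hrhs3 : (0:ℝ) ≤ 2 * L ^ 2 * R ^ 2 * γ ^ 2 / ρ := by positivity
  have hrhs4 : (0:ℝ) ≤ (1 - ρ / 2) * ‖gradient f xprev - dprev‖ ^ 2 :=
    mul_nonneg (by linarith) (sq_nonneg _)
  by_cases hInt : Integrable (fun y => ‖u + ρ • b y‖ ^ 2) P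
  swap
  · rw [integral_undef hInt]
    linarith
  have hFz : ∀ z : EuclideanSpace ℝ (Fin d), Measurable (fun y => F z y) := fun z =>
    hFmeas.comp measurable_prodMk_left
  have hgmeas : Measurable g := by
    apply Finset.measurable_sum
    intro i _
    exact (((hFz _).sub (hFz x)).div_const c).smul_const _
  have hbmeas : Measurable b := measurable_const.sub hgmeas
  have hgood : ∀ᵐ y ∂P, Differentiable ℝ (fun x' => F x' y) ∧
      ∀ u' w' : EuclideanSpace ℝ (Fin d),
        ‖gradient (fun x' => F x' y) u' - gradient (fun x' => F x' y) w'‖ ≤ L * ‖u' - w'‖ :=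
    hFdiff.and hFlip
  set B : ℝ := Real.sqrt ((d : ℝ) * (L * c / 2) ^ 2) with hBdef
  have hB2 : B ^ 2 = (d : ℝ) * (L * c / 2) ^ 2 := Real.sq_sqrt (by positivity)
  have hBnn : 0 ≤ B := Real.sqrt_nonneg _
  have hM : ∀ᵐ y ∂P, ‖G y - g y‖ ≤ B := by
    filter_upwards [hgood] with y hy
    obtain ⟨hdiff, hlip⟩ := hy
    have hsq : ‖G y - g y‖ ^ 2 ≤ (d : ℝ) * (L * c / 2) ^ 2 := by
      rw [normsq_coords]
      have hbound : ∀ i : Fin d, ((G y - g y) i) ^ 2 ≤ (L * c / 2) ^ 2 := by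
        intro i
        have hgapp : (g y) i = (F (x + c • EuclideanSpace.single i (1 : ℝ)) y - F x y) / c :=
          sum_single_apply (fun i => (F (x + c • EuclideanSpace.single i (1 : ℝ)) y - F x y) / c) i
        have h1 : (G y - g y) i = gradient (fun x' => F x' y) x i
            - (F (x + c • EuclideanSpace.single i (1 : ℝ)) y - F x y) / c := by
          simp [hGdef, hgapp]
        have h2 := coord_bias (fun x' => F x' y) hdiff L c hL.le hc hlip x i
        rw [abs_sub_comm] at h2
        rw [h1, ← sq_abs]
        nlinarith [abs_nonneg (gradient (fun x' => F x' y) x i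
            - (F (x + c • EuclideanSpace.single i (1 : ℝ)) y - F x y) / c)]
      calc ∑ i, ((G y - g y) i) ^ 2 ≤ ∑ _i : Fin d, (L * c / 2) ^ 2 :=
            Finset.sum_le_sum fun i _ => hbound i
        _ = (d : ℝ) * (L * c / 2) ^ 2 := by simp [mul_comm]
    calc ‖G y - g y‖ = Real.sqrt (‖G y - g y‖ ^ 2) := (Real.sqrt_sq (norm_nonneg _)).symm
      _ ≤ B := Real.sqrt_le_sqrt hsq
  have hGaesm : AEStronglyMeasurable G P := by
    set gseq : ℕ → Y → EuclideanSpace ℝ (Fin d) := fun n y =>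
      ∑ i : Fin d, (((n : ℝ) + 1) * (F (x + ((n : ℝ) + 1)⁻¹ • EuclideanSpace.single i (1:ℝ)) y
        - F x y)) • EuclideanSpace.single i (1:ℝ) with hgseq
    have hmeas : ∀ n, AEStronglyMeasurable (gseq n) P := by
      intro n
      apply Measurable.aestronglyMeasurable
      apply Finset.measurable_sum
      intro i _
      exact (((hFz _).sub (hFz x)).const_mul _).smul_const _
    have htend : ∀ᵐ y ∂P, Filter.Tendsto (fun n => gseq n y) Filter.atTop (nhds (G y)) := by
      filter_upwards [hFdiff] with y hdiff
      have hcoord : ∀ i : Fin d, Filter.Tendsto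
          (fun n : ℕ => ((n : ℝ) + 1) * (F (x + ((n : ℝ) + 1)⁻¹ • EuclideanSpace.single i (1:ℝ)) y
            - F x y)) Filter.atTop (nhds (G y i)) := by
        intro i
        have hd1 : HasDerivAt (fun t : ℝ => F (x + t • EuclideanSpace.single i (1:ℝ)) y)
            (G y i) 0 := by
          have h1 : HasFDerivAt (fun x' => F x' y)
              ((InnerProductSpace.toDual ℝ _) (G y)) (x + (0:ℝ) • EuclideanSpace.single i (1:ℝ)) := by
            have := ((hdiff x).hasGradientAt).hasFDerivAt
            simpa [hGdef] using this
          have h2 : HasDerivAt (fun t : ℝ => x + t • EuclideanSpace.single i (1:ℝ))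
              (EuclideanSpace.single i (1:ℝ)) 0 := by
            simpa using ((hasDerivAt_id (0:ℝ)).smul_const (EuclideanSpace.single i (1:ℝ))).const_add x
          have h3 := h1.comp_hasDerivAt 0 h2
          have h4 : (InnerProductSpace.toDual ℝ (EuclideanSpace ℝ (Fin d))) (G y)
              (EuclideanSpace.single i (1:ℝ)) = G y i := by
            simp [EuclideanSpace.inner_single_right]
          simpa [h4, Function.comp_def] using h3
        have hslope := hasDerivAt_iff_tendsto_slope.mp hd1
        have hseq : Filter.Tendsto (fun n : ℕ => ((n : ℝ) + 1)⁻¹) Filter.atTop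
            (nhdsWithin 0 {(0:ℝ)}ᶜ) := by
          apply tendsto_nhdsWithin_of_tendsto_nhds_of_eventually_within
          · exact tendsto_one_div_add_atTop_nhds_zero_nat.congr (fun n => by rw [one_div])
          · filter_upwards with n
            simp only [Set.mem_compl_iff, Set.mem_singleton_iff]
            positivity
        have hcomp := hslope.comp hseq
        apply hcomp.congr
        intro n
        have hne : ((n:ℝ) + 1) ≠ 0 := by positivity
        simp only [Function.comp_apply, slope_def_field]
        rw [sub_zero, zero_smul, add_zero]
        field_simp
      have hsum : Filter.Tendsto (fun n => gseq n y) Filter.atTop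
          (nhds (∑ i : Fin d, G y i • EuclideanSpace.single i (1:ℝ))) := by
        apply tendsto_finset_sum
        intro i _
        exact (hcoord i).smul_const _
      rwa [sum_single_eq (G y)] at hsum
    exact aestronglyMeasurable_of_tendsto_ae Filter.atTop hmeas htend
  -- integrability chain
  have hIa : Integrable (fun y => u + ρ • b y) P := by
    apply Integrable.mono' ((integrable_const (1:ℝ)).add hInt)
      (measurable_const.add (hbmeas.const_smul ρ)).aestronglyMeasurable
    filter_upwards with y
    have h0 : (0:ℝ) ≤ ‖u + ρ • b y‖ := norm_nonneg _
    show ‖u + ρ • b y‖ ≤ 1 + ‖u + ρ • b y‖ ^ 2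
    nlinarith [sq_nonneg (‖u + ρ • b y‖ - 1)]
  have hIb : Integrable b P := by
    have hfun : b = fun y => ρ⁻¹ • ((u + ρ • b y) - u) := by
      funext y
      rw [add_sub_cancel_left, smul_smul, inv_mul_cancel₀ hρ0.ne', one_smul]
    rw [hfun]
    exact (hIa.sub (integrable_const u)).smul ρ⁻¹
  have hIb2 : Integrable (fun y => ‖b y‖ ^ 2) P := by
    have hb2m : AEStronglyMeasurable (fun y => ‖b y‖ ^ 2) P := by
      have : (fun y => ‖b y‖ ^ 2) = fun y => ‖b y‖ * ‖b y‖ := by funext y; ring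
      rw [this]
      exact (hbmeas.norm.mul hbmeas.norm).aestronglyMeasurable
    apply Integrable.mono' ((hInt.add (integrable_const (‖u‖ ^ 2))).const_mul (2 * ρ⁻¹ ^ 2)) hb2m
    filter_upwards with y
    have h1 : ρ • b y = (u + ρ • b y) - u := (add_sub_cancel_left u (ρ • b y)).symm
    have h2 : ρ * ‖b y‖ = ‖(u + ρ • b y) - u‖ := by
      rw [← h1, norm_smul, Real.norm_eq_abs, abs_of_pos hρ0]
    have h3 : ‖(u + ρ • b y) - u‖ ≤ ‖u + ρ • b y‖ + ‖u‖ := norm_sub_le _ _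
    have h4 : (ρ * ‖b y‖) ^ 2 ≤ 2 * ‖u + ρ • b y‖ ^ 2 + 2 * ‖u‖ ^ 2 := by
      nlinarith [sq_nonneg (‖u + ρ • b y‖ - ‖u‖), norm_nonneg (b y), hρ0.le,
        mul_nonneg hρ0.le (norm_nonneg (b y)), norm_nonneg ((u + ρ • b y) - u)]
    rw [Real.norm_eq_abs, abs_of_nonneg (by positivity)]
    show ‖b y‖ ^ 2 ≤ 2 * ρ⁻¹ ^ 2 * (‖u + ρ • b y‖ ^ 2 + ‖u‖ ^ 2)
    calc ‖b y‖ ^ 2 = ρ⁻¹ ^ 2 * (ρ * ‖b y‖) ^ 2 := by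
          rw [mul_pow, ← mul_assoc, ← mul_pow, inv_mul_cancel₀ hρ0.ne', one_pow, one_mul]
      _ ≤ ρ⁻¹ ^ 2 * (2 * ‖u + ρ • b y‖ ^ 2 + 2 * ‖u‖ ^ 2) :=
          mul_le_mul_of_nonneg_left h4 (by positivity)
      _ = 2 * ρ⁻¹ ^ 2 * (‖u + ρ • b y‖ ^ 2 + ‖u‖ ^ 2) := by ring
  have hIg : Integrable g P := by
    have hfun : g = fun y => gradient f x - b y := by
      funext y
      rw [hbdef, sub_sub_cancel]
    rw [hfun]
    exact (integrable_const _).sub hIb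
  set m : Y → EuclideanSpace ℝ (Fin d) := fun y => G y - g y with hmdef
  have hmsm : AEStronglyMeasurable m P := hGaesm.sub hgmeas.aestronglyMeasurable
  have hIm : Integrable m P := by
    apply Integrable.mono' (integrable_const B) hmsm
    filter_upwards [hM] with y hy using hy
  have hIG : Integrable G P := by
    have hfun : G = fun y => m y + g y := by
      funext y
      rw [hmdef, sub_add_cancel]
    rw [hfun]
    exact hIm.add hIg
  set s : Y → EuclideanSpace ℝ (Fin d) := fun y => G y - gradient f x with hsdef
  have hIs : Integrable s P := hIG.sub (integrable_const _)
  have hbsplit : ∀ y, b y = m y - s y := by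
    intro y
    show gradient f x - g y = (G y - g y) - (G y - gradient f x)
    abel
  have hIs2 : Integrable (fun y => ‖G y - gradient f x‖ ^ 2) P := by
    have hsm2 : AEStronglyMeasurable (fun y => ‖G y - gradient f x‖ ^ 2) P := by
      have : (fun y => ‖G y - gradient f x‖ ^ 2)
          = fun y => ‖G y - gradient f x‖ * ‖G y - gradient f x‖ := by funext y; ring
      rw [this]
      have hn : AEStronglyMeasurable (fun y => ‖G y - gradient f x‖) P :=
        (hGaesm.sub aestronglyMeasurable_const).norm
      exact hn.mul hn
    apply Integrable.mono' ((hIb2.const_mul 2).add (integrable_const (2 * B ^ 2))) hsm2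
    filter_upwards [hM] with y hy
    have h1 : s y = m y - b y := by rw [hbsplit y]; abel
    have h2 : ‖s y‖ ≤ B + ‖b y‖ := by
      rw [h1]
      exact (norm_sub_le _ _).trans (by gcongr)
    have h3 : ‖s y‖ = ‖G y - gradient f x‖ := rfl
    rw [Real.norm_eq_abs, abs_of_nonneg (by positivity), ← h3]
    show ‖s y‖ ^ 2 ≤ 2 * ‖b y‖ ^ 2 + 2 * B ^ 2
    nlinarith [norm_nonneg (s y), norm_nonneg (b y), hBnn, sq_nonneg (‖b y‖ - B)]
  -- integral identities
  have hEG : ∫ y, G y ∂P = gradient f x := (hgradf x).symm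
  have hEs : ∫ y, s y ∂P = 0 := by
    rw [hsdef]
    rw [integral_sub hIG (integrable_const _), hEG, integral_const, probReal_univ,
      one_smul, sub_self]
  have hEb : ∫ y, b y ∂P = ∫ y, m y ∂P := by
    have hfun : b = fun y => m y - s y := funext hbsplit
    rw [hfun, integral_sub hIm hIs, hEs, sub_zero]
  have hEbnorm : ‖∫ y, b y ∂P‖ ≤ B := by
    rw [hEb]
    calc ‖∫ y, m y ∂P‖ ≤ ∫ y, ‖m y‖ ∂P := norm_integral_le_integral_norm _
      _ ≤ ∫ _y, B ∂P := integral_mono_ae hIm.norm (integrable_const B) hM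
      _ = B := by simp [measure_univ]
  have hσx : (∫ y, ‖G y - gradient f x‖ ^ 2 ∂P) ≤ σ ^ 2 := by
    simp only [hGdef]
    exact hσ x hx
  have hEb2 : ∫ y, ‖b y‖ ^ 2 ∂P ≤ 2 * σ ^ 2 + 2 * B ^ 2 := by
    have hmono : ∫ y, ‖b y‖ ^ 2 ∂P
        ≤ ∫ y, (2 * ‖G y - gradient f x‖ ^ 2 + 2 * B ^ 2) ∂P := by
      apply integral_mono_ae hIb2 ((hIs2.const_mul 2).add (integrable_const _))
      filter_upwards [hM] with y hy
      have h1 : ‖b y‖ ≤ B + ‖G y - gradient f x‖ := by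
        rw [hbsplit y]
        exact (norm_sub_le _ _).trans (by gcongr)
      show ‖b y‖ ^ 2 ≤ 2 * ‖G y - gradient f x‖ ^ 2 + 2 * B ^ 2
      nlinarith [norm_nonneg (b y), norm_nonneg (G y - gradient f x), hBnn,
        sq_nonneg (‖G y - gradient f x‖ - B)]
    have heq : ∫ y, (2 * ‖G y - gradient f x‖ ^ 2 + 2 * B ^ 2) ∂P
        = 2 * (∫ y, ‖G y - gradient f x‖ ^ 2 ∂P) + 2 * B ^ 2 := by
      rw [integral_add (hIs2.const_mul 2) (integrable_const _), integral_const_mul]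
      simp [measure_univ]
    rw [heq] at hmono
    linarith [hσx]
  -- expansion
  have hIinner : Integrable (fun y => ⟪u, b y⟫) P := hIb.const_inner u
  have hexpand : ∫ y, ‖u + ρ • b y‖ ^ 2 ∂P
      = ‖u‖ ^ 2 + 2 * ρ * ⟪u, ∫ y, b y ∂P⟫ + ρ ^ 2 * ∫ y, ‖b y‖ ^ 2 ∂P := by
    have hpt : ∀ y, ‖u + ρ • b y‖ ^ 2
        = ‖u‖ ^ 2 + ((2 * ρ) * ⟪u, b y⟫ + ρ ^ 2 * ‖b y‖ ^ 2) := by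
      intro y
      rw [norm_add_sq_real, inner_smul_right, norm_smul, Real.norm_eq_abs, abs_of_pos hρ0]
      ring
    calc ∫ y, ‖u + ρ • b y‖ ^ 2 ∂P
        = ∫ y, (‖u‖ ^ 2 + ((2 * ρ) * ⟪u, b y⟫ + ρ ^ 2 * ‖b y‖ ^ 2)) ∂P := by
          congr 1
          funext y
          rw [hpt y]
      _ = ‖u‖ ^ 2 + ((2 * ρ) * ∫ y, ⟪u, b y⟫ ∂P + ρ ^ 2 * ∫ y, ‖b y‖ ^ 2 ∂P) := by
          have hI2 : Integrable (fun y => 2 * ρ * ⟪u, b y⟫ + ρ ^ 2 * ‖b y‖ ^ 2) P :=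
            (hIinner.const_mul (2 * ρ)).add (hIb2.const_mul (ρ ^ 2))
          have hI3 : Integrable (fun y => 2 * ρ * ⟪u, b y⟫) P := hIinner.const_mul (2 * ρ)
          have hI4 : Integrable (fun y => ρ ^ 2 * ‖b y‖ ^ 2) P := hIb2.const_mul (ρ ^ 2)
          rw [integral_add (integrable_const _) hI2, integral_add hI3 hI4,
            integral_const_mul, integral_const_mul, integral_const]
          simp [measure_univ]
      _ = ‖u‖ ^ 2 + 2 * ρ * ⟪u, ∫ y, b y ∂P⟫ + ρ ^ 2 * ∫ y, ‖b y‖ ^ 2 ∂P := by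
          rw [integral_inner hIb]
          ring
  have hkey : ∫ y, ‖u + ρ • b y‖ ^ 2 ∂P
      ≤ (1 + ρ) * ‖u‖ ^ 2 + ρ * B ^ 2 + ρ ^ 2 * (2 * σ ^ 2 + 2 * B ^ 2) := by
    rw [hexpand]
    have h1 : ⟪u, ∫ y, b y ∂P⟫ ≤ ‖u‖ * B :=
      (real_inner_le_norm _ _).trans (mul_le_mul_of_nonneg_left hEbnorm (norm_nonneg u))
    have h2 : 2 * ρ * ⟪u, ∫ y, b y ∂P⟫ ≤ ρ * ‖u‖ ^ 2 + ρ * B ^ 2 := by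
      nlinarith [sq_nonneg (‖u‖ - B), hρ0.le, norm_nonneg u, hBnn]
    have h3 : ρ ^ 2 * (∫ y, ‖b y‖ ^ 2 ∂P) ≤ ρ ^ 2 * (2 * σ ^ 2 + 2 * B ^ 2) :=
      mul_le_mul_of_nonneg_left hEb2 (sq_nonneg ρ)
    linarith
  -- bound on ‖u‖²
  have hδbound : ‖δ‖ ≤ L * (γ * R) :=
    (hflip x xprev).trans (mul_le_mul_of_nonneg_left hstep hL.le)
  have hu2 : ‖u‖ ^ 2 ≤ (1 - ρ) ^ 2 * ((1 + ρ / 2) * ‖v‖ ^ 2 + (1 + 2 / ρ) * (L * (γ * R)) ^ 2) := by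
    have h1 : ‖u‖ = |1 - ρ| * ‖v + δ‖ := by
      rw [hu, ← smul_add, norm_smul, Real.norm_eq_abs]
    have h2 : ‖u‖ ^ 2 = (1 - ρ) ^ 2 * ‖v + δ‖ ^ 2 := by
      rw [h1, mul_pow, sq_abs]
    rw [h2]
    apply mul_le_mul_of_nonneg_left _ (sq_nonneg _)
    have h3 : ‖v + δ‖ ^ 2 = ‖v‖ ^ 2 + 2 * ⟪v, δ⟫ + ‖δ‖ ^ 2 := norm_add_sq_real v δ
    have h4 : ⟪v, δ⟫ ≤ ‖v‖ * ‖δ‖ := real_inner_le_norm _ _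
    have h5 : ‖δ‖ ^ 2 ≤ (L * (γ * R)) ^ 2 := pow_le_pow_left₀ (norm_nonneg _) hδbound 2
    have h7 : 2 * ρ * (‖v‖ * ‖δ‖) ≤ (ρ ^ 2 / 2) * ‖v‖ ^ 2 + 2 * ‖δ‖ ^ 2 := by
      nlinarith [sq_nonneg (ρ * ‖v‖ - 2 * ‖δ‖)]
    have h6 : 2 * (‖v‖ * ‖δ‖) ≤ (ρ / 2) * ‖v‖ ^ 2 + (2 / ρ) * ‖δ‖ ^ 2 := by
      have e1 : 2 * (‖v‖ * ‖δ‖) = (2 * ρ * (‖v‖ * ‖δ‖)) / ρ := by field_simp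
      have e2 : ((ρ ^ 2 / 2) * ‖v‖ ^ 2 + 2 * ‖δ‖ ^ 2) / ρ
          = (ρ / 2) * ‖v‖ ^ 2 + (2 / ρ) * ‖δ‖ ^ 2 := by
        field_simp
      rw [e1, ← e2]
      exact (div_le_div_iff_of_pos_right hρ0).mpr h7
    have h8 : (2 / ρ) * ‖δ‖ ^ 2 ≤ (2 / ρ) * (L * (γ * R)) ^ 2 :=
      mul_le_mul_of_nonneg_left h5 (by positivity)
    linarith
  -- final coefficient arithmetic
  have hV : (0:ℝ) ≤ ‖v‖ ^ 2 := sq_nonneg _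
  have hW : (0:ℝ) ≤ (L * (γ * R)) ^ 2 := sq_nonneg _
  have hcoef1 : (1 + ρ) * ((1 - ρ) ^ 2 * (1 + ρ / 2)) ≤ 1 - ρ / 2 := by
    nlinarith [mul_nonneg (sq_nonneg ρ) (by linarith : (0:ℝ) ≤ 1 - ρ), sq_nonneg ρ,
      mul_nonneg (mul_nonneg (sq_nonneg ρ) hρ0.le) (by linarith : (0:ℝ) ≤ 1 - ρ)]
  have hcoef2 : (1 + ρ) * ((1 - ρ) ^ 2 * (1 + 2 / ρ)) ≤ 2 / ρ := by
    have e1 : (1 + ρ) * ((1 - ρ) ^ 2 * (1 + 2 / ρ))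
        = ((1 + ρ) * ((1 - ρ) ^ 2 * (ρ + 2))) / ρ := by
      field_simp
    rw [e1]
    refine (div_le_div_iff_of_pos_right hρ0).mpr ?_
    nlinarith [mul_nonneg hρ0.le (by linarith : (0:ℝ) ≤ 1 - ρ),
      mul_nonneg (mul_nonneg hρ0.le hρ0.le) (by linarith : (0:ℝ) ≤ 1 - ρ),
      mul_nonneg (mul_nonneg (mul_nonneg hρ0.le hρ0.le) hρ0.le) (by linarith : (0:ℝ) ≤ 1 - ρ),
      mul_nonneg (mul_nonneg (mul_nonneg hρ0.le hρ0.le) hρ0.le) hρ0.le]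
  have hfinal1 : (1 + ρ) * ‖u‖ ^ 2
      ≤ (1 - ρ / 2) * ‖v‖ ^ 2 + (2 / ρ) * (L * (γ * R)) ^ 2 := by
    have h1 : (1 + ρ) * ‖u‖ ^ 2
        ≤ (1 + ρ) * ((1 - ρ) ^ 2 * ((1 + ρ / 2) * ‖v‖ ^ 2 + (1 + 2 / ρ) * (L * (γ * R)) ^ 2)) :=
      mul_le_mul_of_nonneg_left hu2 (by linarith)
    have h2 : (1 + ρ) * ((1 - ρ) ^ 2 * ((1 + ρ / 2) * ‖v‖ ^ 2 + (1 + 2 / ρ) * (L * (γ * R)) ^ 2))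
        = ((1 + ρ) * ((1 - ρ) ^ 2 * (1 + ρ / 2))) * ‖v‖ ^ 2
          + ((1 + ρ) * ((1 - ρ) ^ 2 * (1 + 2 / ρ))) * (L * (γ * R)) ^ 2 := by ring
    have h3 : ((1 + ρ) * ((1 - ρ) ^ 2 * (1 + ρ / 2))) * ‖v‖ ^ 2 ≤ (1 - ρ / 2) * ‖v‖ ^ 2 :=
      mul_le_mul_of_nonneg_right hcoef1 hV
    have h4 : ((1 + ρ) * ((1 - ρ) ^ 2 * (1 + 2 / ρ))) * (L * (γ * R)) ^ 2
        ≤ (2 / ρ) * (L * (γ * R)) ^ 2 :=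
      mul_le_mul_of_nonneg_right hcoef2 hW
    linarith
  have hB2bound : ρ * B ^ 2 + ρ ^ 2 * (2 * B ^ 2) ≤ 2 * ρ * c ^ 2 * d * L ^ 2 := by
    rw [hB2]
    have hdpos : (0:ℝ) ≤ (d:ℝ) := Nat.cast_nonneg d
    nlinarith [sq_nonneg (L * c), mul_nonneg hdpos (sq_nonneg (L * c)), hρ0.le, hρ1,
      mul_nonneg (mul_nonneg hρ0.le hdpos) (sq_nonneg (L * c))]
  have hWeq : (2 / ρ) * (L * (γ * R)) ^ 2 = 2 * L ^ 2 * R ^ 2 * γ ^ 2 / ρ := by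
    ring
  calc ∫ y, ‖u + ρ • b y‖ ^ 2 ∂P
      ≤ (1 + ρ) * ‖u‖ ^ 2 + ρ * B ^ 2 + ρ ^ 2 * (2 * σ ^ 2 + 2 * B ^ 2) := hkey
    _ = (1 + ρ) * ‖u‖ ^ 2 + (ρ * B ^ 2 + ρ ^ 2 * (2 * B ^ 2)) + 2 * ρ ^ 2 * σ ^ 2 := by ring
    _ ≤ ((1 - ρ / 2) * ‖v‖ ^ 2 + (2 / ρ) * (L * (γ * R)) ^ 2)
        + 2 * ρ * c ^ 2 * d * L ^ 2 + 2 * ρ ^ 2 * σ ^ 2 := by linarith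
    _ = 2 * ρ ^ 2 * σ ^ 2 + 2 * ρ * c ^ 2 * d * L ^ 2 + 2 * L ^ 2 * R ^ 2 * γ ^ 2 / ρ
        + (1 - ρ / 2) * ‖v‖ ^ 2 := by rw [hWeq]; ring
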